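/- Let α, τ_α, β, τ_β be real numbers with 0 < α < 1, τ_α ≥ 0, τ_β ≥ 0, and β < 1 − α. Then for every complex λ with Re λ ≥ 0, P(λ) = (λ + 1 − α·e^{−λτ_α})·(τ_β·λ + 1) − β ≠ 0; that is, the trivial solution of the m = 1 equation is asymptotically stable in the region β < 1 − α, τ_β ≥ 0. -/

import Mathlib

theorem m1_stable_of_alpha_pos
    (α τα β τβ : ℝ) (hα₀ : 0 < α) (hα₁ : α < 1) (hτα : 0 ≤ τα) (hτβ : 0 ≤ τβ)
    (hβ : β < 1 - α) :
    ∀ lam : ℂ, 0 ≤ lam.re →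
      (lam + 1 - (α : ℂ) * Complex.exp (-lam * (τα : ℂ))) * ((τβ : ℂ) * lam + 1)
        - (β : ℂ) ≠ 0 := by
  intro lam hre h0
  have hprod : (lam + 1 - (α : ℂ) * Complex.exp (-lam * (τα : ℂ))) * ((τβ : ℂ) * lam + 1)
      = (β : ℂ) := by linear_combination h0
  set z := lam + 1 - (α : ℂ) * Complex.exp (-lam * (τα : ℂ)) with hzdef
  set w := (τβ : ℂ) * lam + 1 with hwdef
  have hexp_re : (Complex.exp (-lam * (τα : ℂ))).re ≤ 1 := by
    have h1 : (Complex.exp (-lam * (τα : ℂ))).re ≤ ‖Complex.exp (-lam * (τα : ℂ))‖ :=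
      Complex.re_le_norm _
    rw [Complex.norm_exp] at h1
    have h2 : (-lam * (τα : ℂ)).re = -(lam.re * τα) := by
      simp [Complex.mul_re]
    have h3 : Real.exp ((-lam * (τα : ℂ)).re) ≤ 1 := by
      rw [h2, Real.exp_le_one_iff]
      have := mul_nonneg hre hτα
      linarith
    linarith
  have ha : 1 - α ≤ z.re := by
    have hz : z.re = lam.re + 1 - α * (Complex.exp (-lam * (τα : ℂ))).re := by
      simp [hzdef, Complex.sub_re, Complex.add_re, Complex.mul_re]
    have := mul_le_mul_of_nonneg_left hexp_re hα₀.le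
    rw [hz]; linarith
  have hc : 1 ≤ w.re := by
    have hwre : w.re = τβ * lam.re + 1 := by
      simp [hwdef, Complex.add_re, Complex.mul_re]
    have := mul_nonneg hτβ hre
    rw [hwre]; linarith
  have hre_eq : z.re * w.re - z.im * w.im = β := by
    have := congrArg Complex.re hprod
    simpa [Complex.mul_re] using this
  have him_eq : z.re * w.im + z.im * w.re = 0 := by
    have := congrArg Complex.im hprod
    simpa [Complex.mul_im] using this
  have key : z.re * w.re ^ 2 + z.re * w.im ^ 2 = β * w.re := by
    linear_combination w.re * hre_eq + w.im * him_eq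
  nlinarith [sq_nonneg w.im, sq_nonneg w.re, mul_nonneg (by linarith : (0:ℝ) ≤ 1 - α) (sq_nonneg w.im), sq_nonneg (w.re - 1)]
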